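/- Let n ≥ 5 and let v₁, ..., vₙ be unit vectors in ℝ² summing to zero, with three angularly consecutive vectors a, b, c (counterclockwise order a, b, c, no other vector in between). Let α be the angle from a to b and γ the angle from b to c. If α + γ ≥ 180°, then 60° < α < 120° and 60° < γ < 120°. -/

import Mathlib

open Real

lemma circ_sin_nonneg (a b c d : ℝ) (ha : a^2 + b^2 = 1) (hc : c^2 + d^2 = 1)
    (hb : 0 ≤ b) (hd : 0 ≤ d) (hc0 : 0 ≤ c) (hac : c ≤ a) : 0 ≤ a*d - b*c := by
  have ha0 : 0 ≤ a := le_trans hc0 hac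
  nlinarith [mul_nonneg hb hc0, mul_nonneg ha0 hd, sq_nonneg (a*d - b*c), sq_nonneg (a*d + b*c), mul_nonneg hb hd, mul_nonneg hc0 ha0]

lemma kpi (ch sh st ct : ℝ)
    (h1 : ch^2 + sh^2 = 1) (h2 : st^2 + ct^2 = 1)
    (hch0 : 0 ≤ ch) (hch : ch ≤ 1/2)
    (hsh : Real.sqrt 3 / 2 ≤ sh)
    (hst0 : 0 ≤ st) (hstsh : st ≤ sh) (hct : 0 ≤ ct)
    (hlo : sh - Real.sqrt 3 * ch ≤ 2 * st) :
    1 + 8*ch^2 ≤ 2*sh*st + 6*ch*ct := by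
  have h3 : Real.sqrt 3 ^ 2 = 3 := Real.sq_sqrt (by norm_num)
  have h4 : (0:ℝ) ≤ Real.sqrt 3 := Real.sqrt_nonneg 3
  have hsh0 : (0:ℝ) ≤ sh := le_trans (by positivity) hsh
  set s2 : ℝ := (sh - Real.sqrt 3 * ch)/2 with hs2
  set c2 : ℝ := (ch + Real.sqrt 3 * sh)/2 with hc2
  have hcirc2 : s2^2 + c2^2 = 1 := by
    simp only [hs2, hc2]
    linear_combination ((1 + Real.sqrt 3^2)/4) * h1 + (1/4) * h3
  have hs20 : 0 ≤ s2 := by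
    have : Real.sqrt 3 * ch ≤ Real.sqrt 3 / 2 := by nlinarith
    simp only [hs2]; linarith
  have hc20 : 0 ≤ c2 := by simp only [hc2]; positivity
  have hsts2 : s2 ≤ st := by simp only [hs2]; linarith
  have hX : 0 ≤ sh*ct - ch*st := circ_sin_nonneg sh ch st ct (by linarith) h2 hch0 hct hst0 hstsh
  have hY : 0 ≤ st*c2 - ct*s2 := circ_sin_nonneg st ct s2 c2 h2 hcirc2 hct hc20 hs20 hsts2
  have hCb : ct*c2 + st*s2 ≤ 1 := by nlinarith [sq_nonneg (ct - c2), sq_nonneg (st - s2)]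
  have hCa : ch*ct + sh*st ≤ 1 := by nlinarith [sq_nonneg (ct - ch), sq_nonneg (st - sh)]
  have h2' : st^2 + ct^2 - 1 = 0 := by linarith
  have hG : ct*(sh - s2) - (ch*(st - s2) + c2*(sh - st))
      = (sh*ct - ch*st)*(1 - (ct*c2 + st*s2)) + (st*c2 - ct*s2)*(1 - (ch*ct + sh*st))
        + (sh*c2 - ch*s2)*(st^2 + ct^2 - 1) := by ring
  rw [h2', mul_zero, add_zero] at hG
  have hchord : ch*(st - s2) + c2*(sh - st) ≤ ct*(sh - s2) := by
    have u1 := mul_nonneg hX (sub_nonneg.2 hCb)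
    have u2 := mul_nonneg hY (sub_nonneg.2 hCa)
    linarith [hG]
  have hP1 : 1 + 8*ch^2 ≤ 2*sh*sh + 6*ch*ch := by nlinarith [h1, hch, hch0]
  have hsqch : 3*ch ≤ Real.sqrt 3 * sh := by
    have l1 : Real.sqrt 3 * (Real.sqrt 3 / 2) ≤ Real.sqrt 3 * sh :=
      mul_le_mul_of_nonneg_left hsh h4
    have l2 : Real.sqrt 3 * (Real.sqrt 3 / 2) = 3/2 := by
      rw [show Real.sqrt 3 * (Real.sqrt 3 / 2) = Real.sqrt 3 ^2 / 2 by ring, h3]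
    linarith
  have hP2 : 1 + 8*ch^2 ≤ 2*sh*s2 + 6*ch*c2 := by
    have hq := mul_nonneg hch0 (sub_nonneg.2 hsqch)
    simp only [hs2, hc2]
    have exp : 2*sh*((sh - Real.sqrt 3 * ch)/2) + 6*ch*((ch + Real.sqrt 3 * sh)/2)
        = (ch^2 + sh^2) + 2*(ch*(Real.sqrt 3 * sh - 3*ch)) + 8*ch^2 := by ring
    rw [exp, h1]; linarith
  have hlam : 0 < sh - s2 := by
    have l3 : (0:ℝ) < Real.sqrt 3 / 2 := by positivity
    have := mul_nonneg h4 hch0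
    simp only [hs2]; linarith
  have key : (sh - s2)*(2*sh*st + 6*ch*ct - (1 + 8*ch^2))
      = (st - s2)*(2*sh*sh + 6*ch*ch - (1 + 8*ch^2))
        + (sh - st)*(2*sh*s2 + 6*ch*c2 - (1 + 8*ch^2))
        + 6*ch*(ct*(sh - s2) - (ch*(st - s2) + c2*(sh - st))) := by ring
  have hpos : 0 ≤ (sh - s2)*(2*sh*st + 6*ch*ct - (1 + 8*ch^2)) := by
    rw [key]
    have t1 := mul_nonneg (sub_nonneg.2 hsts2) (sub_nonneg.2 hP1)
    have t2 := mul_nonneg (sub_nonneg.2 hstsh) (sub_nonneg.2 hP2)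
    have t3 := mul_nonneg (by linarith : (0:ℝ) ≤ 6*ch) (sub_nonneg.2 hchord)
    linarith
  by_contra hcon
  push_neg at hcon
  have := mul_neg_of_pos_of_neg hlam (by linarith : 2*sh*st + 6*ch*ct - (1 + 8*ch^2) < 0)
  linarith


private lemma sinle {a b : ℝ} (h1 : -(π/2) ≤ a) (h2 : a ≤ b) (h3 : b ≤ π/2) :
    Real.sin a ≤ Real.sin b := by
  rcases eq_or_lt_of_le h2 with h|h
  · rw [h]
  · exact le_of_lt (Real.strictMonoOn_sin ⟨h1, le_trans h2 h3⟩ ⟨le_trans h1 h2, h3⟩ h)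

private lemma sinlt {a b : ℝ} (h1 : -(π/2) ≤ a) (h2 : a < b) (h3 : b ≤ π/2) :
    Real.sin a < Real.sin b :=
  Real.strictMonoOn_sin ⟨h1, le_trans (le_of_lt h2) h3⟩ ⟨le_trans h1 (le_of_lt h2), h3⟩ h2

private lemma le_of_sq_le_sq' {a b : ℝ} (hb : 0 ≤ b) (h : a^2 ≤ b^2) : a ≤ b := by
  nlinarith [sq_nonneg (a - b), sq_nonneg (a + b)]

private lemma lt_of_sq_lt_sq' {a b : ℝ} (hb : 0 ≤ b) (h : a^2 < b^2) : a < b := by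
  nlinarith [sq_nonneg (a - b), sq_nonneg (a + b)]

private lemma sin_two_mul_form (A B : ℝ) :
    Real.sin (A + B) + Real.sin (A - B) = 2 * Real.sin A * Real.cos B := by
  rw [Real.sin_add, Real.sin_sub]; ring

/-- Exchange lemma, ordered nonnegative-sum case. -/
private lemma EL0 (h y1 y2 : ℝ) (h0 : 0 < h) (hh : h ≤ π/2)
    (hy1 : |y1| ≤ h) (hy2 : |y2| ≤ h) (hS : 0 ≤ Real.sin y1 + Real.sin y2)
    (hord : y2 ≤ y1) :
    ∃ z : ℝ, |z| ≤ h ∧ Real.sin h + Real.sin z = Real.sin y1 + Real.sin y2 ∧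
      Real.cos h + Real.cos z ≤ Real.cos y1 + Real.cos y2 ∧
      (|y1| < h → |y2| < h → Real.cos h + Real.cos z < Real.cos y1 + Real.cos y2) := by
  obtain ⟨hy1l, hy1u⟩ := abs_le.1 hy1
  obtain ⟨hy2l, hy2u⟩ := abs_le.1 hy2
  have hpi2 : (0:ℝ) < π/2 := by positivity
  have hsh1 : Real.sin h ≤ 1 := Real.sin_le_one h
  have hshpos : 0 < Real.sin h := Real.sin_pos_of_pos_of_lt_pi h0 (by linarith [Real.pi_pos])
  have hs1 : Real.sin y1 ≤ Real.sin h := sinle (by linarith) hy1u hh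
  have hs2 : Real.sin y2 ≤ Real.sin h := sinle (by linarith) hy2u hh
  set S := Real.sin y1 + Real.sin y2 with hSdef
  set p := S - Real.sin h with hpdef
  have hple : p ≤ Real.sin h := by simp only [hpdef]; linarith
  have hpge : -Real.sin h ≤ p := by simp only [hpdef]; linarith
  have hp1 : -1 ≤ p := by linarith
  have hp1' : p ≤ 1 := by linarith
  set z := Real.arcsin p with hzdef
  have hsinz : Real.sin z = p := Real.sin_arcsin hp1 hp1'
  have hzu : z ≤ h := by
    have := Real.monotone_arcsin hple
    rwa [show Real.arcsin (Real.sin h) = h from Real.arcsin_sin (by linarith) hh] at this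
  have hzl : -h ≤ z := by
    have := Real.monotone_arcsin hpge
    rwa [show (-Real.sin h) = Real.sin (-h) by rw [Real.sin_neg],
      show Real.arcsin (Real.sin (-h)) = -h from Real.arcsin_sin (by linarith) (by linarith)] at this
  have hzabs : |z| ≤ h := abs_le.2 ⟨hzl, hzu⟩
  -- the key comparison
  set B := (y1 - y2)/2 with hBdef
  have hB0 : 0 ≤ B := by simp only [hBdef]; linarith
  have hBh : B ≤ h := by simp only [hBdef]; linarith
  have hcosB : 0 ≤ Real.cos B := Real.cos_nonneg_of_mem_Icc ⟨by linarith, by linarith⟩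
  have key : S ≤ Real.sin h + Real.sin (h - (y1 - y2)) := by
    have e1 := sin_two_mul_form ((y1+y2)/2) B
    rw [show (y1+y2)/2 + B = y1 by simp only [hBdef]; ring,
        show (y1+y2)/2 - B = y2 by simp only [hBdef]; ring] at e1
    have e2 := sin_two_mul_form (h - B) B
    rw [show h - B + B = h by ring, show h - B - B = h - (y1 - y2) by simp only [hBdef]; ring] at e2
    have hmono : Real.sin ((y1+y2)/2) ≤ Real.sin (h - B) :=
      sinle (by linarith) (by simp only [hBdef]; linarith) (by linarith)
    have := mul_le_mul_of_nonneg_right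
      (mul_le_mul_of_nonneg_left hmono (by norm_num : (0:ℝ) ≤ 2)) hcosB
    simp only [hSdef]; linarith [e1, e2, this]
  have keystrict : |y1| < h → |y2| < h → S < Real.sin h + Real.sin (h - (y1 - y2)) := by
    intro hy1s hy2s
    obtain ⟨h1l, h1u⟩ := abs_lt.1 hy1s
    obtain ⟨h2l, h2u⟩ := abs_lt.1 hy2s
    have e1 := sin_two_mul_form ((y1+y2)/2) B
    rw [show (y1+y2)/2 + B = y1 by simp only [hBdef]; ring,
        show (y1+y2)/2 - B = y2 by simp only [hBdef]; ring] at e1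
    have e2 := sin_two_mul_form (h - B) B
    rw [show h - B + B = h by ring, show h - B - B = h - (y1 - y2) by simp only [hBdef]; ring] at e2
    have hBlt : B < h := by simp only [hBdef]; linarith
    have hcosBpos : 0 < Real.cos B := Real.cos_pos_of_mem_Ioo ⟨by linarith, by linarith⟩
    have hmono : Real.sin ((y1+y2)/2) < Real.sin (h - B) :=
      sinlt (by linarith) (by simp only [hBdef]; linarith) (by linarith)
    have := mul_lt_mul_of_pos_right (mul_lt_mul_of_pos_left hmono (by norm_num : (0:ℝ) < 2)) hcosBpos
    simp only [hSdef]; linarith [e1, e2, this]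
  -- from key : z ≤ h - (y1 - y2)
  have hargl : -(π/2) ≤ h - (y1 - y2) := by linarith
  have hargu : h - (y1 - y2) ≤ π/2 := by linarith
  have hzarg : z ≤ h - (y1 - y2) := by
    have hps : p ≤ Real.sin (h - (y1 - y2)) := by simp only [hpdef, hSdef]; linarith [key]
    have := Real.monotone_arcsin hps
    rwa [Real.arcsin_sin hargl hargu] at this
  have hzargs : |y1| < h → |y2| < h → z < h - (y1 - y2) := by
    intro a b
    have hps : p < Real.sin (h - (y1 - y2)) := by
      simp only [hpdef, hSdef]; linarith [keystrict a b]
    have := Real.strictMonoOn_arcsin ⟨hp1, hp1'⟩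
      ⟨Real.neg_one_le_sin _, Real.sin_le_one _⟩ hps
    rwa [Real.arcsin_sin hargl hargu] at this
  -- cos comparisons via squares
  have hd1 : 0 ≤ y1 - y2 := by linarith
  have hd2 : h - z ≤ π := by linarith [Real.pi_pos]
  have hccmp : Real.cos (h - z) ≤ Real.cos (y1 - y2) :=
    Real.cos_le_cos_of_nonneg_of_le_pi hd1 hd2 (by linarith [hzarg])
  have idA : (Real.cos y1 + Real.cos y2)^2 = 2 + 2*Real.cos (y1 - y2) - S^2 := by
    rw [Real.cos_sub]; simp only [hSdef]
    linear_combination Real.cos_sq_add_sin_sq y1 + Real.cos_sq_add_sin_sq y2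
  have idB : (Real.cos h + Real.cos z)^2 = 2 + 2*Real.cos (h - z) - S^2 := by
    rw [Real.cos_sub]
    have hsz : Real.sin h + Real.sin z = S := by rw [hsinz]; simp only [hpdef]; ring
    linear_combination Real.cos_sq_add_sin_sq h + Real.cos_sq_add_sin_sq z
      - (S + (Real.sin h + Real.sin z)) * hsz
  have hnnA : 0 ≤ Real.cos y1 + Real.cos y2 := by
    have := Real.cos_nonneg_of_mem_Icc (show y1 ∈ Set.Icc (-(π/2)) (π/2) from ⟨by linarith, by linarith⟩)
    have := Real.cos_nonneg_of_mem_Icc (show y2 ∈ Set.Icc (-(π/2)) (π/2) from ⟨by linarith, by linarith⟩)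
    linarith
  refine ⟨z, hzabs, by rw [hsinz]; simp only [hpdef, hSdef]; ring, ?_, ?_⟩
  · exact le_of_sq_le_sq' hnnA (by linarith [idA, idB, hccmp])
  · intro a b
    have hccmps : Real.cos (h - z) < Real.cos (y1 - y2) := by
      have := hzargs a b
      exact Real.cos_lt_cos_of_nonneg_of_le_pi hd1 hd2 (by linarith)
    exact lt_of_sq_lt_sq' hnnA (by linarith [idA, idB, hccmps])

/-- Exchange lemma, general form. -/
private lemma EL (h y1 y2 : ℝ) (h0 : 0 < h) (hh : h ≤ π/2)
    (hy1 : |y1| ≤ h) (hy2 : |y2| ≤ h) :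
    ∃ (ε : ℝ) (z : ℝ), (ε = 1 ∨ ε = -1) ∧ |z| ≤ h ∧
      ε * Real.sin h + Real.sin z = Real.sin y1 + Real.sin y2 ∧
      Real.cos h + Real.cos z ≤ Real.cos y1 + Real.cos y2 ∧
      (|y1| < h → |y2| < h → Real.cos h + Real.cos z < Real.cos y1 + Real.cos y2) := by
  rcases le_or_gt 0 (Real.sin y1 + Real.sin y2) with hS | hS
  · rcases le_total y2 y1 with hord | hord
    · obtain ⟨z, hz, h1, h2, h3⟩ := EL0 h y1 y2 h0 hh hy1 hy2 hS hord
      exact ⟨1, z, Or.inl rfl, hz, by linarith, h2, h3⟩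
    · obtain ⟨z, hz, h1, h2, h3⟩ := EL0 h y2 y1 h0 hh hy2 hy1 (by linarith) hord
      exact ⟨1, z, Or.inl rfl, hz, by linarith, by linarith, fun a b => by linarith [h3 b a]⟩
  · have hS' : 0 ≤ Real.sin (-y1) + Real.sin (-y2) := by
      rw [Real.sin_neg, Real.sin_neg]; linarith
    have hy1' : |(-y1)| ≤ h := by rwa [abs_neg]
    have hy2' : |(-y2)| ≤ h := by rwa [abs_neg]
    rcases le_total (-y2) (-y1) with hord | hord
    · obtain ⟨z, hz, h1, h2, h3⟩ := EL0 h (-y1) (-y2) h0 hh hy1' hy2' hS' hord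
      rw [Real.sin_neg, Real.sin_neg] at h1
      rw [Real.cos_neg, Real.cos_neg] at h2 h3
      refine ⟨-1, -z, Or.inr rfl, by rwa [abs_neg], ?_, ?_, ?_⟩
      · rw [Real.sin_neg]; linarith
      · rw [Real.cos_neg]; linarith
      · intro a b; rw [Real.cos_neg]
        have := h3 (by rwa [abs_neg]) (by rwa [abs_neg]); linarith
    · obtain ⟨z, hz, h1, h2, h3⟩ := EL0 h (-y2) (-y1) h0 hh hy2' hy1' (by linarith) hord
      rw [Real.sin_neg, Real.sin_neg] at h1
      rw [Real.cos_neg, Real.cos_neg] at h2 h3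
      refine ⟨-1, -z, Or.inr rfl, by rwa [abs_neg], ?_, ?_, ?_⟩
      · rw [Real.sin_neg]; linarith
      · rw [Real.cos_neg]; linarith
      · intro a b; rw [Real.cos_neg]
        have := h3 (by rwa [abs_neg]) (by rwa [abs_neg]); linarith

/-- Merging induction over a list of angles in `[-h, h]`. -/
private lemma IND (h : ℝ) (h0 : 0 < h) (hh : h ≤ π/2) :
    ∀ L : List ℝ, L ≠ [] → (∀ y ∈ L, |y| ≤ h) →
    ∃ (j l : ℕ) (z : ℝ), |z| ≤ h ∧ j + l + 1 = L.length ∧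
      ((l : ℝ) - (j : ℝ)) * Real.sin h + Real.sin z = (L.map Real.sin).sum ∧
      ((j : ℝ) + (l : ℝ)) * Real.cos h + Real.cos z ≤ (L.map Real.cos).sum := by
  intro L
  induction L with
  | nil => intro hne _; exact absurd rfl hne
  | cons y T ih =>
    intro _ hmem
    by_cases hT : T = []
    · subst hT
      exact ⟨0, 0, y, hmem y (by simp), by simp, by simp, by simp⟩
    · obtain ⟨j, l, z, hz, hlen, hsin, hcos⟩ :=
        ih hT (fun x hx => hmem x (List.mem_cons_of_mem _ hx))
      obtain ⟨ε, z', hε, hz', hsin', hcos', _⟩ := EL h y z h0 hh (hmem y (by simp)) hz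
      rcases hε with rfl | rfl
      · refine ⟨j, l + 1, z', hz', by simp [← hlen]; ring_nf, ?_, ?_⟩
        · push_cast
          simp only [List.map_cons, List.sum_cons]
          linarith [hsin, hsin']
        · push_cast
          simp only [List.map_cons, List.sum_cons]
          linarith [hcos, hcos']
      · refine ⟨j + 1, l, z', hz', by simp [← hlen]; ring_nf, ?_, ?_⟩
        · push_cast
          simp only [List.map_cons, List.sum_cons]
          linarith [hsin, hsin']
        · push_cast
          simp only [List.map_cons, List.sum_cons]
          linarith [hcos, hcos']

/-- The analytic inequality for the `D = -1` case. -/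
private lemma AI (h θ₀ z : ℝ) (hh3 : π/3 < h) (hh2 : h ≤ π/2)
    (hθl : h - π/3 ≤ θ₀) (hθu : θ₀ < h)
    (hz : |z| ≤ h) (hsz : Real.sin z = Real.sin h - Real.sin θ₀) :
    Real.cos θ₀ ≤ 3 * Real.cos h + Real.cos z := by
  have hpi : (0:ℝ) < π := Real.pi_pos
  have hθ0 : 0 < θ₀ := by linarith
  obtain ⟨hzl, hzu⟩ := abs_le.1 hz
  have hcz0 : 0 ≤ Real.cos z := Real.cos_nonneg_of_mem_Icc ⟨by linarith, by linarith⟩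
  have hch0 : 0 ≤ Real.cos h := Real.cos_nonneg_of_mem_Icc ⟨by linarith, by linarith⟩
  have hch : Real.cos h ≤ 1/2 := by
    have := Real.cos_le_cos_of_nonneg_of_le_pi (by positivity : (0:ℝ) ≤ π/3)
      (by linarith) (le_of_lt hh3)
    rwa [Real.cos_pi_div_three] at this
  have hsh : Real.sqrt 3 / 2 ≤ Real.sin h := by
    have := sinle (by linarith : -(π/2) ≤ π/3) (le_of_lt hh3) hh2
    rwa [Real.sin_pi_div_three] at this
  have hst0 : 0 ≤ Real.sin θ₀ := Real.sin_nonneg_of_nonneg_of_le_pi (le_of_lt hθ0) (by linarith)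
  have hstsh : Real.sin θ₀ ≤ Real.sin h := sinle (by linarith) (le_of_lt hθu) hh2
  have hct0 : 0 ≤ Real.cos θ₀ := Real.cos_nonneg_of_mem_Icc ⟨by linarith, by linarith⟩
  have hlo : Real.sin h - Real.sqrt 3 * Real.cos h ≤ 2 * Real.sin θ₀ := by
    have h1 : Real.sin (h - π/3) ≤ Real.sin θ₀ := sinle (by linarith) hθl (by linarith)
    rw [Real.sin_sub, Real.cos_pi_div_three, Real.sin_pi_div_three] at h1
    linarith
  have hkpi := kpi (Real.cos h) (Real.sin h) (Real.sin θ₀) (Real.cos θ₀)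
    (Real.cos_sq_add_sin_sq h) (by linarith [Real.sin_sq_add_cos_sq θ₀] :
      Real.sin θ₀^2 + Real.cos θ₀^2 = 1) hch0 hch hsh hst0 hstsh hct0 hlo
  by_cases hc : Real.cos θ₀ ≤ 3 * Real.cos h
  · linarith
  · push_neg at hc
    have hsq : (Real.cos θ₀ - 3 * Real.cos h)^2 ≤ Real.cos z ^2 := by
      have h1 : Real.cos z ^2 = 1 - (Real.sin h - Real.sin θ₀)^2 := by
        have := Real.sin_sq_add_cos_sq z
        rw [hsz] at this; linarith
      have h2 := Real.sin_sq_add_cos_sq θ₀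
      have h3 := Real.sin_sq_add_cos_sq h
      nlinarith [hkpi]
    have := le_of_sq_le_sq' hcz0 hsq
    linarith

/-- The core impossibility lemma. -/
private lemma core {J : Type*} [DecidableEq J] (S : Finset J) (y : J → ℝ) (h θ₀ : ℝ)
    (h0 : 0 < h) (hh : h ≤ π/2)
    (hcard : 4 ≤ S.card)
    (hy : ∀ j ∈ S, |y j| ≤ h)
    (a b : J) (ha : a ∈ S) (hb : b ∈ S) (hab : a ≠ b)
    (hya : |y a| < h) (hyb : |y b| < h)
    (hθa : |θ₀| < h) (hθb : h - π/3 ≤ θ₀)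
    (hsum_cos : ∑ j ∈ S, Real.cos (y j) = Real.cos θ₀)
    (hsum_sin : ∑ j ∈ S, Real.sin (y j) = -Real.sin θ₀) : False := by
  have hpi : (0:ℝ) < π := Real.pi_pos
  obtain ⟨hθ₀l, hθ₀u⟩ := abs_lt.1 hθa
  set S' := (S.erase a).erase b with hS'
  have hbSa : b ∈ S.erase a := Finset.mem_erase.2 ⟨fun hx => hab (hx.symm), hb⟩
  have hcard' : S'.card = S.card - 2 := by
    rw [hS', Finset.card_erase_of_mem hbSa, Finset.card_erase_of_mem ha]; omega
  have hcard'2 : 2 ≤ S'.card := by omega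
  have hS'sub : ∀ j ∈ S', j ∈ S := fun j hj =>
    Finset.mem_of_mem_erase (Finset.mem_of_mem_erase hj)
  -- split sums
  have hsplit_cos : Real.cos (y a) + Real.cos (y b) + ∑ j ∈ S', Real.cos (y j)
      = Real.cos θ₀ := by
    rw [← hsum_cos, hS']
    rw [← Finset.sum_erase_add S _ ha, ← Finset.sum_erase_add (S.erase a) _ hbSa]; ring
  have hsplit_sin : Real.sin (y a) + Real.sin (y b) + ∑ j ∈ S', Real.sin (y j)
      = -Real.sin θ₀ := by
    rw [← hsum_sin, hS']
    rw [← Finset.sum_erase_add S _ ha, ← Finset.sum_erase_add (S.erase a) _ hbSa]; ring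
  -- exchange on a, b (strict)
  obtain ⟨ε, z0, hε, hz0, hsin0, _, hcos0s⟩ :=
    EL h (y a) (y b) h0 hh (le_of_lt hya) (le_of_lt hyb)
  have hcos0 := hcos0s hya hyb
  -- list for induction
  set L : List ℝ := z0 :: (S'.toList.map y) with hL
  have hLlen : L.length = S'.card + 1 := by
    simp [hL]
  have hLmem : ∀ x ∈ L, |x| ≤ h := by
    intro x hx
    rcases List.mem_cons.1 hx with rfl | hx'
    · exact hz0
    · obtain ⟨j, hj, rfl⟩ := List.mem_map.1 hx'
      exact hy j (hS'sub j (Finset.mem_toList.1 hj))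
  obtain ⟨j, l, z, hz, hlen, hsinI, hcosI⟩ := IND h h0 hh L (by simp [hL]) hLmem
  -- identify list sums with finset sums
  have hsinL : (L.map Real.sin).sum = Real.sin z0 + ∑ j ∈ S', Real.sin (y j) := by
    simp only [hL, List.map_cons, List.sum_cons, List.map_map]
    rw [Finset.sum_map_toList]
    rfl
  have hcosL : (L.map Real.cos).sum = Real.cos z0 + ∑ j ∈ S', Real.cos (y j) := by
    simp only [hL, List.map_cons, List.sum_cons, List.map_map]
    rw [Finset.sum_map_toList]
    rfl
  -- effective counts
  obtain ⟨j', l', hjl, hsinT, hcosT⟩ :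
      ∃ j' l' : ℕ, j' + l' = j + l + 1 ∧
        ((l' : ℝ) - (j' : ℝ)) * Real.sin h + Real.sin z = -Real.sin θ₀ ∧
        ((j' : ℝ) + (l' : ℝ)) * Real.cos h + Real.cos z < Real.cos θ₀ := by
    rcases hε with rfl | rfl
    · refine ⟨j, l + 1, by omega, ?_, ?_⟩
      · push_cast
        have := hsinL
        rw [this] at hsinI
        linarith [hsin0, hsinI, hsplit_sin]
      · push_cast
        rw [hcosL] at hcosI
        linarith [hcos0, hcosI, hsplit_cos]
    · refine ⟨j + 1, l, by omega, ?_, ?_⟩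
      · push_cast
        rw [hsinL] at hsinI
        linarith [hsin0, hsinI, hsplit_sin]
      · push_cast
        rw [hcosL] at hcosI
        linarith [hcos0, hcosI, hsplit_cos]
  have hN3 : 3 ≤ j' + l' := by
    have : j + l + 1 = L.length := hlen
    omega
  obtain ⟨hzl, hzu⟩ := abs_le.1 hz
  have hshpos : 0 < Real.sin h := Real.sin_pos_of_pos_of_lt_pi h0 (by linarith)
  have hch0 : 0 ≤ Real.cos h := Real.cos_nonneg_of_mem_Icc ⟨by linarith, by linarith⟩
  have hsz_le : Real.sin z ≤ Real.sin h := sinle (by linarith) hzu hh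
  have hsz_ge : -Real.sin h ≤ Real.sin z := by
    have := sinle (by linarith : -(π/2) ≤ -h) hzl (by linarith : z ≤ π/2)
    rwa [Real.sin_neg] at this
  have hsθ_lt : Real.sin θ₀ < Real.sin h := sinlt (by linarith) hθ₀u hh
  have hsθ_gt : -Real.sin h < Real.sin θ₀ := by
    have := sinlt (by linarith : -(π/2) ≤ -h) hθ₀l (by linarith : θ₀ ≤ π/2)
    rwa [Real.sin_neg] at this
  -- |l' - j'| < 2
  have hDbound : ((l' : ℤ) = j' ∨ (l' : ℤ) = j' + 1 ∨ (j' : ℤ) = l' + 1) := by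
    have hX : ((l' : ℝ) - (j' : ℝ)) * Real.sin h = -Real.sin θ₀ - Real.sin z := by
      linarith [hsinT]
    have h1 : ((l' : ℝ) - (j' : ℝ)) * Real.sin h < 2 * Real.sin h := by
      rw [hX]; linarith
    have h2 : (-2 : ℝ) * Real.sin h < ((l' : ℝ) - (j' : ℝ)) * Real.sin h := by
      rw [hX]; linarith
    have h3 : ((l' : ℝ) - (j' : ℝ)) < 2 := (mul_lt_mul_iff_of_pos_right hshpos).mp h1
    have h4 : (-2 : ℝ) < ((l' : ℝ) - (j' : ℝ)) := (mul_lt_mul_iff_of_pos_right hshpos).mp h2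
    have h7 : (l' : ℤ) - (j' : ℤ) < 2 := by exact_mod_cast h3
    have h8 : (-2 : ℤ) < (l' : ℤ) - (j' : ℤ) := by exact_mod_cast h4
    omega
  have hNcast : (3:ℝ) ≤ (j' : ℝ) + (l' : ℝ) := by exact_mod_cast (by exact_mod_cast hN3 : (3:ℕ) ≤ j' + l')
  by_cases hsmall : h ≤ π/3
  · -- easy case: everything ≥ 2 > 1
    have hcz : Real.cos h ≤ Real.cos z := by
      rw [← Real.cos_abs z]
      exact Real.cos_le_cos_of_nonneg_of_le_pi (abs_nonneg z) (by linarith) hz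
    have hch : (1:ℝ)/2 ≤ Real.cos h := by
      have := Real.cos_le_cos_of_nonneg_of_le_pi (by linarith : (0:ℝ) ≤ h) (by linarith) hsmall
      rw [Real.cos_pi_div_three] at this; linarith
    have hc1 : Real.cos θ₀ ≤ 1 := Real.cos_le_one θ₀
    have hmul : 3 * Real.cos h ≤ ((j' : ℝ) + (l' : ℝ)) * Real.cos h :=
      mul_le_mul_of_nonneg_right hNcast hch0
    linarith [hcosT, hcz, hch, hmul, hc1]
  · push_neg at hsmall
    have hθpos : 0 < θ₀ := by linarith
    have hsθpos : 0 < Real.sin θ₀ := Real.sin_pos_of_pos_of_lt_pi hθpos (by linarith)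
    rcases hDbound with hD | hD | hD
    · -- l' = j' : sin z = -sin θ₀, cos z = cos θ₀
      have hljr : (l' : ℝ) = (j' : ℝ) := by exact_mod_cast hD
      have hszv : Real.sin z = -Real.sin θ₀ := by
        rw [hljr] at hsinT; linarith [hsinT]
      have hcz0 : 0 ≤ Real.cos z := Real.cos_nonneg_of_mem_Icc ⟨by linarith, by linarith⟩
      have hcθ0 : 0 ≤ Real.cos θ₀ := Real.cos_nonneg_of_mem_Icc ⟨by linarith, by linarith⟩
      have hczv : Real.cos z = Real.cos θ₀ := by
        have e1 := Real.sin_sq_add_cos_sq z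
        have e2 := Real.sin_sq_add_cos_sq θ₀
        rw [hszv] at e1
        have e3 : (Real.cos z - Real.cos θ₀) * (Real.cos z + Real.cos θ₀) = 0 := by
          linear_combination e1 - e2
        rcases mul_eq_zero.1 e3 with h' | h'
        · linarith
        · linarith
      rw [hczv] at hcosT
      have hmul : 3 * Real.cos h ≤ ((j' : ℝ) + (l' : ℝ)) * Real.cos h :=
        mul_le_mul_of_nonneg_right hNcast hch0
      linarith [hcosT, hmul, hch0]
    · -- l' = j' + 1 : sin z too negative
      have hljr : (l' : ℝ) = (j' : ℝ) + 1 := by exact_mod_cast hD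
      rw [hljr] at hsinT
      have : Real.sin z = -Real.sin θ₀ - Real.sin h := by linarith [hsinT]
      linarith [hsz_ge]
    · -- j' = l' + 1 : AI case
      have hljr : (j' : ℝ) = (l' : ℝ) + 1 := by exact_mod_cast hD
      rw [hljr] at hsinT
      have hszv : Real.sin z = Real.sin h - Real.sin θ₀ := by linarith [hsinT]
      have hAI := AI h θ₀ z hsmall hh hθb hθ₀u hz hszv
      have hmul : 3 * Real.cos h ≤ ((j' : ℝ) + (l' : ℝ)) * Real.cos h :=
        mul_le_mul_of_nonneg_right hNcast hch0
      linarith [hcosT, hmul, hAI]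

/-- The counterclockwise angular gap from `v i` to the angularly next vector `v (i+1)`
(indices mod `n`), for unit vectors `v i = (cos (θ i), sin (θ i))` listed in strictly
increasing angular order in `[0, 2π)`. -/
noncomputable def angGap (n : ℕ) [NeZero n] (θ : Fin n → ℝ) (i : Fin n) : ℝ :=
  if (i : ℕ) + 1 < n then θ (i + 1) - θ i else θ (i + 1) + 2 * π - θ i

set_option maxHeartbeats 2000000 in
/-- Special Combined Angle Lemma, quantitative part: let `n ≥ 5` unit
vectors `v i = (cos (θ i), sin (θ i))` sum to zero, listed in counterclockwise angular
order.  Fix `i` and consider the angularly consecutive triple `a = v (i-1)`, `b = v i`,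
`c = v (i+1)`; let `α = angGap (i-1)` be the angle from `a` to `b` and `γ = angGap i`
the angle from `b` to `c`.  If `α + γ ≥ 180°` then `60° < α < 120°` and
`60° < γ < 120°`. -/
theorem special_combined_angle_bounds
    (n : ℕ) [NeZero n] (hn : 5 ≤ n) (θ : Fin n → ℝ)
    (hrange : ∀ i, θ i ∈ Set.Ico 0 (2 * π))
    (hmono : StrictMono θ)
    (hcos : ∑ i, Real.cos (θ i) = 0)
    (hsin : ∑ i, Real.sin (θ i) = 0)
    (i : Fin n)
    (hcomb : π ≤ angGap n θ (i - 1) + angGap n θ i) :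
    π / 3 < angGap n θ (i - 1) ∧ angGap n θ (i - 1) < 2 * π / 3 ∧
    π / 3 < angGap n θ i ∧ angGap n θ i < 2 * π / 3 := by
  have hpi : (0:ℝ) < π := Real.pi_pos
  set iv := (i : ℕ) with hivdef
  have hivlt : iv < n := i.isLt
  -- value of i+1
  have hv1 : ((i + 1 : Fin n) : ℕ) = (iv + 1) % n := by
    rw [Fin.val_add, Fin.val_one', Nat.mod_eq_of_lt (show 1 < n by omega)]
  have hv1' : (iv + 1 < n ∧ ((i + 1 : Fin n) : ℕ) = iv + 1) ∨
      (iv + 1 = n ∧ ((i + 1 : Fin n) : ℕ) = 0) := by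
    rcases lt_or_ge (iv + 1) n with hlt | hge
    · exact Or.inl ⟨hlt, by rw [hv1, Nat.mod_eq_of_lt hlt]⟩
    · have he : iv + 1 = n := by omega
      exact Or.inr ⟨he, by rw [hv1, he, Nat.mod_self]⟩
  -- value of i-1
  have hvm1 : ((i - 1 : Fin n) : ℕ) = ((n - 1) + iv) % n := by
    rw [Fin.sub_def]
    simp only [Fin.val_one', Nat.mod_eq_of_lt (show 1 < n by omega)]
    rfl
  have hvm1' : (iv = 0 ∧ ((i - 1 : Fin n) : ℕ) = n - 1) ∨
      (0 < iv ∧ ((i - 1 : Fin n) : ℕ) = iv - 1) := by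
    rcases Nat.eq_zero_or_pos iv with h0 | h0
    · refine Or.inl ⟨h0, ?_⟩
      rw [hvm1, h0, Nat.add_zero, Nat.mod_eq_of_lt (by omega)]
    · refine Or.inr ⟨h0, ?_⟩
      rw [hvm1, show (n - 1) + iv = n + (iv - 1) by omega, Nat.add_mod_left,
        Nat.mod_eq_of_lt (by omega)]
  have hne1 : (i + 1 : Fin n) ≠ i := by
    intro hcon
    have := congrArg Fin.val hcon
    rcases hv1' with ⟨h1, h2⟩ | ⟨h1, h2⟩ <;> omega
  have hnem1 : (i - 1 : Fin n) ≠ i := by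
    intro hcon
    have := congrArg Fin.val hcon
    rcases hvm1' with ⟨h1, h2⟩ | ⟨h1, h2⟩ <;> omega
  -- the rotated angles
  set ξ : Fin n → ℝ := fun j => if iv < (j : ℕ) then θ j - θ i else θ j - θ i + 2*π with hξdef
  have hξbound : ∀ j : Fin n, j ≠ i → 0 < ξ j ∧ ξ j < 2*π := by
    intro j hj
    have hjv : (j:ℕ) ≠ iv := fun hh => hj (Fin.ext hh)
    by_cases hcase : iv < (j:ℕ)
    · have hθlt : θ i < θ j := hmono (show i < j from Fin.lt_def.2 hcase)
      simp only [hξdef, if_pos hcase]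
      exact ⟨by linarith, by linarith [(hrange j).2, (hrange i).1]⟩
    · have hθlt : θ j < θ i := hmono (show j < i from Fin.lt_def.2 (by omega))
      simp only [hξdef, if_neg hcase]
      exact ⟨by linarith [(hrange j).1, (hrange i).2], by linarith⟩
  -- cyclic position
  set pos : Fin n → ℕ := fun j => if iv < (j:ℕ) then (j:ℕ) - iv else (j:ℕ) + n - iv
    with hposdef
  have cyc : ∀ j k : Fin n, j ≠ i → k ≠ i → pos j < pos k → ξ j < ξ k := by
    intro j k hj hk hjk
    have hjv : (j:ℕ) ≠ iv := fun hh => hj (Fin.ext hh)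
    have hkv : (k:ℕ) ≠ iv := fun hh => hk (Fin.ext hh)
    simp only [hposdef] at hjk
    simp only [hξdef]
    split_ifs at hjk ⊢ with h1 h2 h2
    · have := hmono (show j < k from Fin.lt_def.2 (by omega))
      linarith
    · linarith [(hrange j).2, (hrange k).1]
    · exact absurd hjk (by omega)
    · have := hmono (show j < k from Fin.lt_def.2 (by omega))
      linarith
  -- endpoints of the arc
  have hx1 : ξ (i + 1) = angGap n θ i := by
    rcases hv1' with ⟨hlt, hval⟩ | ⟨heq, hval⟩
    · simp only [hξdef, angGap, if_pos (show iv < ((i+1 : Fin n):ℕ) by omega),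
        if_pos (show (i:ℕ) + 1 < n from hlt)]
    · simp only [hξdef, angGap, if_neg (show ¬ iv < ((i+1 : Fin n):ℕ) by omega),
        if_neg (show ¬ ((i:ℕ) + 1 < n) by omega)]
      ring
  have hip : i - 1 + 1 = i := by
    rw [sub_add_cancel]
  have hx2 : ξ (i - 1) = 2*π - angGap n θ (i - 1) := by
    rcases hvm1' with ⟨h0iv, hval⟩ | ⟨hpos0, hval⟩
    · have hcond : ¬ (((i - 1 : Fin n):ℕ) + 1 < n) := by omega
      simp only [hξdef, angGap, if_pos (show iv < ((i-1 : Fin n):ℕ) by omega), if_neg hcond, hip]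
      ring
    · have hcond : ((i - 1 : Fin n):ℕ) + 1 < n := by omega
      simp only [hξdef, angGap, if_neg (show ¬ iv < ((i-1 : Fin n):ℕ) by omega),
        if_pos hcond, hip]
      ring
  set γ := angGap n θ i with hγdef
  set α := angGap n θ (i - 1) with hαdef
  -- positions of endpoints
  have hpos_i1 : pos (i + 1) = 1 := by
    simp only [hposdef]
    rcases hv1' with ⟨h1, h2⟩ | ⟨h1, h2⟩
    · rw [if_pos (by omega)]; omega
    · rw [if_neg (by omega)]; omega
  have hpos_im1 : pos (i - 1) = n - 1 := by
    simp only [hposdef]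
    rcases hvm1' with ⟨h1, h2⟩ | ⟨h1, h2⟩
    · rw [if_pos (by omega)]; omega
    · rw [if_neg (by omega)]; omega
  have hposrange : ∀ j : Fin n, j ≠ i → 1 ≤ pos j ∧ pos j ≤ n - 1 := by
    intro j hj
    have hjv : (j:ℕ) ≠ iv := fun hh => hj (Fin.ext hh)
    have hjlt : (j:ℕ) < n := j.isLt
    simp only [hposdef]
    split_ifs with h1 <;> omega
  have hpos_eq1 : ∀ j : Fin n, j ≠ i → pos j = 1 → j = i + 1 := by
    intro j hj h1
    have hjv : (j:ℕ) ≠ iv := fun hh => hj (Fin.ext hh)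
    have hjlt : (j:ℕ) < n := j.isLt
    simp only [hposdef] at h1
    apply Fin.ext
    split_ifs at h1 with hc <;> rcases hv1' with ⟨e1, e2⟩ | ⟨e1, e2⟩ <;> omega
  have hpos_eqn1 : ∀ j : Fin n, j ≠ i → pos j = n - 1 → j = i - 1 := by
    intro j hj h1
    have hjv : (j:ℕ) ≠ iv := fun hh => hj (Fin.ext hh)
    have hjlt : (j:ℕ) < n := j.isLt
    simp only [hposdef] at h1
    apply Fin.ext
    split_ifs at h1 with hc <;> rcases hvm1' with ⟨e1, e2⟩ | ⟨e1, e2⟩ <;> omega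
  -- arc bounds for all j ≠ i
  have hξlb : ∀ j : Fin n, j ≠ i → γ ≤ ξ j := by
    intro j hj
    by_cases hj1 : j = i + 1
    · rw [hj1, hx1]
    · have h1 := hposrange j hj
      have h2 : pos (i + 1) < pos j := by
        rw [hpos_i1]
        rcases Nat.lt_or_ge 1 (pos j) with h | h
        · exact h
        · exact absurd (hpos_eq1 j hj (by omega)) hj1
      have := cyc (i + 1) j hne1 hj h2
      rw [hx1] at this; linarith
  have hξub : ∀ j : Fin n, j ≠ i → ξ j ≤ 2*π - α := by
    intro j hj
    by_cases hj1 : j = i - 1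
    · rw [hj1, hx2]
    · have h1 := hposrange j hj
      have h2 : pos j < pos (i - 1) := by
        rw [hpos_im1]
        rcases Nat.lt_or_ge (pos j) (n - 1) with h | h
        · exact h
        · exact absurd (hpos_eqn1 j hj (by omega)) hj1
      have := cyc j (i - 1) hj hnem1 h2
      rw [hx2] at this; linarith
  -- the two interior witnesses
  have hn0 : 0 < n := by omega
  set a' : Fin n := ⟨(iv + 2) % n, Nat.mod_lt _ hn0⟩ with ha'def
  set b' : Fin n := ⟨(iv + 3) % n, Nat.mod_lt _ hn0⟩ with hb'def
  have hva' : ((iv + 2) % n = iv + 2 ∧ iv + 2 < n) ∨ ((iv + 2) % n = iv + 2 - n ∧ n ≤ iv + 2) := by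
    rcases lt_or_ge (iv + 2) n with h | h
    · exact Or.inl ⟨Nat.mod_eq_of_lt h, h⟩
    · exact Or.inr ⟨by rw [Nat.mod_eq_sub_mod h, Nat.mod_eq_of_lt (by omega)], h⟩
  have hvb' : ((iv + 3) % n = iv + 3 ∧ iv + 3 < n) ∨ ((iv + 3) % n = iv + 3 - n ∧ n ≤ iv + 3) := by
    rcases lt_or_ge (iv + 3) n with h | h
    · exact Or.inl ⟨Nat.mod_eq_of_lt h, h⟩
    · exact Or.inr ⟨by rw [Nat.mod_eq_sub_mod h, Nat.mod_eq_of_lt (by omega)], h⟩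
  have ha'i : a' ≠ i := by
    intro hcon; have := congrArg Fin.val hcon
    simp only [ha'def] at this
    rcases hva' with ⟨e1, e2⟩ | ⟨e1, e2⟩ <;> omega
  have hb'i : b' ≠ i := by
    intro hcon; have := congrArg Fin.val hcon
    simp only [hb'def] at this
    rcases hvb' with ⟨e1, e2⟩ | ⟨e1, e2⟩ <;> omega
  have ha'b' : a' ≠ b' := by
    intro hcon; have := congrArg Fin.val hcon
    simp only [ha'def, hb'def] at this
    rcases hva' with ⟨e1, e2⟩ | ⟨e1, e2⟩ <;> rcases hvb' with ⟨f1, f2⟩ | ⟨f1, f2⟩ <;> omega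
  have hpos_a' : pos a' = 2 := by
    simp only [hposdef, ha'def]
    rcases hva' with ⟨e1, e2⟩ | ⟨e1, e2⟩
    · rw [e1, if_pos (by omega)]; omega
    · rw [e1, if_neg (by omega)]; omega
  have hpos_b' : pos b' = 3 := by
    simp only [hposdef, hb'def]
    rcases hvb' with ⟨e1, e2⟩ | ⟨e1, e2⟩
    · rw [e1, if_pos (by omega)]; omega
    · rw [e1, if_neg (by omega)]; omega
  have hξa' : γ < ξ a' ∧ ξ a' < 2*π - α := by
    constructor
    · have := cyc (i+1) a' hne1 ha'i (by rw [hpos_i1, hpos_a']; omega)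
      rwa [hx1] at this
    · have := cyc a' (i-1) ha'i hnem1 (by rw [hpos_im1, hpos_a']; omega)
      rwa [hx2] at this
  have hξb' : γ < ξ b' ∧ ξ b' < 2*π - α := by
    constructor
    · have := cyc (i+1) b' hne1 hb'i (by rw [hpos_i1, hpos_b']; omega)
      rwa [hx1] at this
    · have := cyc b' (i-1) hb'i hnem1 (by rw [hpos_im1, hpos_b']; omega)
      rwa [hx2] at this
  -- sums over the erased set
  set S : Finset (Fin n) := Finset.univ.erase i with hSdef
  have hScard : S.card = n - 1 := by
    rw [hSdef, Finset.card_erase_of_mem (Finset.mem_univ i), Finset.card_univ, Fintype.card_fin]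
  have hmemS : ∀ j : Fin n, j ≠ i → j ∈ S := by
    intro j hj; rw [hSdef]; exact Finset.mem_erase.2 ⟨hj, Finset.mem_univ j⟩
  have hSne : ∀ j ∈ S, j ≠ i := fun j hj => (Finset.mem_erase.1 (hSdef ▸ hj)).1
  have hsum_cos_univ : ∑ j, Real.cos (θ j - θ i) = 0 := by
    have e : ∀ j ∈ Finset.univ, Real.cos (θ j - θ i)
        = Real.cos (θ j) * Real.cos (θ i) + Real.sin (θ j) * Real.sin (θ i) :=
      fun j _ => Real.cos_sub _ _
    rw [Finset.sum_congr rfl e, Finset.sum_add_distrib, ← Finset.sum_mul, ← Finset.sum_mul,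
      hcos, hsin]
    ring
  have hsum_sin_univ : ∑ j, Real.sin (θ j - θ i) = 0 := by
    have e : ∀ j ∈ Finset.univ, Real.sin (θ j - θ i)
        = Real.sin (θ j) * Real.cos (θ i) - Real.cos (θ j) * Real.sin (θ i) :=
      fun j _ => Real.sin_sub _ _
    rw [Finset.sum_congr rfl e, Finset.sum_sub_distrib, ← Finset.sum_mul, ← Finset.sum_mul,
      hcos, hsin]
    ring
  have hξcos : ∀ j ∈ S, Real.cos (ξ j) = Real.cos (θ j - θ i) := by
    intro j _
    simp only [hξdef]
    split_ifs
    · rfl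
    · exact Real.cos_add_two_pi _
  have hξsin : ∀ j ∈ S, Real.sin (ξ j) = Real.sin (θ j - θ i) := by
    intro j _
    simp only [hξdef]
    split_ifs
    · rfl
    · exact Real.sin_add_two_pi _
  have hSc : ∑ j ∈ S, Real.cos (ξ j) = -1 := by
    rw [Finset.sum_congr rfl hξcos]
    have hsplit := Finset.sum_erase_add Finset.univ (fun j => Real.cos (θ j - θ i))
      (Finset.mem_univ i)
    rw [hsum_cos_univ] at hsplit
    have : Real.cos (θ i - θ i) = 1 := by rw [sub_self, Real.cos_zero]
    rw [hSdef]
    linarith [hsplit, this]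
  have hSs : ∑ j ∈ S, Real.sin (ξ j) = 0 := by
    rw [Finset.sum_congr rfl hξsin]
    have hsplit := Finset.sum_erase_add Finset.univ (fun j => Real.sin (θ j - θ i))
      (Finset.mem_univ i)
    rw [hsum_sin_univ] at hsplit
    have : Real.sin (θ i - θ i) = 0 := by rw [sub_self, Real.sin_zero]
    rw [hSdef]
    linarith [hsplit, this]
    -- basic facts about γ and α
  have hγpos : 0 < γ := by
    have := (hξbound (i+1) hne1).1; rw [hx1] at this; exact this
  have hαpos : 0 < α := by
    have := (hξbound (i-1) hnem1).2; rw [hx2] at this; linarith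
  have hγ2π : γ < 2*π := by
    have := (hξbound (i+1) hne1).2; rw [hx1] at this; exact this
  have hwpos : 0 < (2*π - α) - γ := by
    have h1 := hξa'.1; have h2 := hξa'.2; linarith
  have hwle : (2*π - α) - γ ≤ π := by
    rw [hγdef, hαdef]; linarith [hcomb]
  -- sin γ > 0 and sin α > 0 hence γ, α < π
  have hterm_nonneg : ∀ j ∈ S, 0 ≤ Real.sin (ξ j - γ) := by
    intro j hj
    apply Real.sin_nonneg_of_nonneg_of_le_pi
    · linarith [hξlb j (hSne j hj)]
    · linarith [hξub j (hSne j hj)]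
  have hsum_sin_γ : ∑ j ∈ S, Real.sin (ξ j - γ) = Real.sin γ := by
    have e : ∀ j ∈ S, Real.sin (ξ j - γ)
        = Real.sin (ξ j) * Real.cos γ - Real.cos (ξ j) * Real.sin γ :=
      fun j _ => Real.sin_sub _ _
    rw [Finset.sum_congr rfl e, Finset.sum_sub_distrib, ← Finset.sum_mul, ← Finset.sum_mul,
      hSc, hSs]
    ring
  have hsinγpos : 0 < Real.sin γ := by
    rw [← hsum_sin_γ]
    refine Finset.sum_pos' hterm_nonneg ⟨a', hmemS a' ha'i, ?_⟩
    exact Real.sin_pos_of_pos_of_lt_pi (by linarith [hξa'.1]) (by linarith [hξa'.2])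
  have hγltπ : γ < π := by
    by_contra hcon
    push_neg at hcon
    have h2 : 0 ≤ Real.sin (γ - π) :=
      Real.sin_nonneg_of_nonneg_of_le_pi (by linarith) (by linarith)
    rw [Real.sin_sub_pi] at h2
    linarith
  have hsum_sin_α : ∑ j ∈ S, Real.sin ((2*π - α) - ξ j) = Real.sin α := by
    have e : ∀ j ∈ S, Real.sin ((2*π - α) - ξ j)
        = Real.sin (2*π - α) * Real.cos (ξ j) - Real.cos (2*π - α) * Real.sin (ξ j) :=
      fun j _ => Real.sin_sub _ _
    rw [Finset.sum_congr rfl e, Finset.sum_sub_distrib, ← Finset.mul_sum, ← Finset.mul_sum,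
      hSc, hSs]
    have : Real.sin (2*π - α) = -Real.sin α := by
      rw [show 2*π - α = -α + 2*π by ring, Real.sin_add_two_pi, Real.sin_neg]
    rw [this]; ring
  have hsinαpos : 0 < Real.sin α := by
    rw [← hsum_sin_α]
    refine Finset.sum_pos' (fun j hj => ?_) ⟨a', hmemS a' ha'i, ?_⟩
    · apply Real.sin_nonneg_of_nonneg_of_le_pi
      · linarith [hξub j (hSne j hj)]
      · linarith [hξlb j (hSne j hj)]
    · exact Real.sin_pos_of_pos_of_lt_pi (by linarith [hξa'.2]) (by linarith [hξa'.1])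
  have hαltπ : α < π := by
    by_contra hcon
    push_neg at hcon
    have h2 : 0 ≤ Real.sin (α - π) :=
      Real.sin_nonneg_of_nonneg_of_le_pi (by linarith) (by linarith)
    rw [Real.sin_sub_pi] at h2
    linarith
  -- set up the frame for the core lemma
  set w : ℝ := (2*π - α) - γ with hwdef
  set hb : ℝ := w / 2 with hbdef
  set β : ℝ := γ + hb with hβdef
  set θ₀ : ℝ := β - π with hθ₀def
  have hb0 : 0 < hb := by rw [hbdef]; linarith
  have hbπ : hb ≤ π/2 := by rw [hbdef]; linarith
  have hθ₀abs : |θ₀| < hb := by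
    rw [abs_lt]
    constructor
    · have h1 : θ₀ = β - π := hθ₀def
      linarith [hβdef, hbdef, hwdef, hαltπ]
    · have h1 : θ₀ = β - π := hθ₀def
      linarith [hβdef, hbdef, hwdef, hγltπ]
  have hcard4 : 4 ≤ S.card := by omega
  -- sums in the β-frame
  have hSyc : ∑ j ∈ S, Real.cos (ξ j - β) = Real.cos θ₀ := by
    have e : ∀ j ∈ S, Real.cos (ξ j - β)
        = Real.cos (ξ j) * Real.cos β + Real.sin (ξ j) * Real.sin β :=
      fun j _ => Real.cos_sub _ _
    rw [Finset.sum_congr rfl e, Finset.sum_add_distrib, ← Finset.sum_mul, ← Finset.sum_mul,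
      hSc, hSs, show θ₀ = β - π from rfl, Real.cos_sub_pi]
    ring
  have hSys : ∑ j ∈ S, Real.sin (ξ j - β) = -Real.sin θ₀ := by
    have e : ∀ j ∈ S, Real.sin (ξ j - β)
        = Real.sin (ξ j) * Real.cos β - Real.cos (ξ j) * Real.sin β :=
      fun j _ => Real.sin_sub _ _
    rw [Finset.sum_congr rfl e, Finset.sum_sub_distrib, ← Finset.sum_mul, ← Finset.sum_mul,
      hSc, hSs, show θ₀ = β - π from rfl, Real.sin_sub_pi]
    ring
  have hyabs : ∀ j ∈ S, |ξ j - β| ≤ hb := by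
    intro j hj
    rw [abs_le]
    constructor
    · have := hξlb j (hSne j hj); linarith [hwdef, hbdef, hβdef]
    · have := hξub j (hSne j hj); linarith [hwdef, hbdef, hβdef]
  have hya' : |ξ a' - β| < hb := by
    rw [abs_lt]
    exact ⟨by linarith [hξa'.1, hwdef, hbdef, hβdef], by linarith [hξa'.2, hwdef, hbdef, hβdef]⟩
  have hyb' : |ξ b' - β| < hb := by
    rw [abs_lt]
    exact ⟨by linarith [hξb'.1, hwdef, hbdef, hβdef], by linarith [hξb'.2, hwdef, hbdef, hβdef]⟩
  -- upper bound for γ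
  have hγub : γ < 2*π/3 := by
    by_contra hcon
    push_neg at hcon
    refine core S (fun j => ξ j - β) hb θ₀ hb0 hbπ hcard4 hyabs a' b'
      (hmemS a' ha'i) (hmemS b' hb'i) ha'b' hya' hyb' hθ₀abs ?_ hSyc hSys
    linarith [hθ₀def, hβdef, hbdef, hwdef]
  -- upper bound for α
  have hαub : α < 2*π/3 := by
    by_contra hcon
    push_neg at hcon
    refine core S (fun j => β - ξ j) hb (-θ₀) hb0 hbπ hcard4
      (fun j hj => by
        show |β - ξ j| ≤ hb
        rw [show β - ξ j = -(ξ j - β) by ring, abs_neg]; exact hyabs j hj)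
      a' b' (hmemS a' ha'i) (hmemS b' hb'i) ha'b'
      (by show |β - ξ a'| < hb
          rw [show β - ξ a' = -(ξ a' - β) by ring, abs_neg]; exact hya')
      (by show |β - ξ b'| < hb
          rw [show β - ξ b' = -(ξ b' - β) by ring, abs_neg]; exact hyb')
      (by rwa [abs_neg]) ?_ ?_ ?_
    · linarith [hθ₀def, hβdef, hbdef, hwdef]
    · show ∑ j ∈ S, Real.cos (β - ξ j) = Real.cos (-θ₀)
      rw [Real.cos_neg, ← hSyc]
      apply Finset.sum_congr rfl
      intro j _
      rw [show β - ξ j = -(ξ j - β) by ring, Real.cos_neg]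
    · show ∑ j ∈ S, Real.sin (β - ξ j) = -Real.sin (-θ₀)
      rw [Real.sin_neg, neg_neg, show Real.sin θ₀ = -(-Real.sin θ₀) by ring, ← hSys,
        ← Finset.sum_neg_distrib]
      apply Finset.sum_congr rfl
      intro j _
      rw [show β - ξ j = -(ξ j - β) by ring, Real.sin_neg]
  -- assemble
  refine ⟨?_, hαub, ?_, hγub⟩
  · rw [hαdef] at *; linarith [hcomb]
  · rw [hγdef] at *; linarith [hcomb]
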